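/- For every τ ∈ [−n^{1/(β−1)}, n^{1/(β−1)}] one has h(n^{1/(β−1)}, τ) ≤ 0 and h(−n^{1/(β−1)}, τ) ≤ 0, where h(t,τ) := 2(nt − τ|τ|^{β−1})² − C_β (t−τ)(n²t − τ|τ|^{2(β−1)}). -/

import Mathlib

noncomputable section

private lemma hasDerivAt_mul_abs_rpow (p : ℝ) (hp : 0 < p) (t : ℝ) :
    HasDerivAt (fun x : ℝ => x * |x| ^ p) ((p + 1) * |t| ^ p) t := by
  rcases lt_trichotomy t 0 with ht | rfl | ht
  · have h1 : HasDerivAt (fun x : ℝ => -((-x) ^ (p + 1))) ((p+1) * |t| ^ p) t := by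
      have h2 : HasDerivAt (fun x : ℝ => (-x) ^ (p + 1)) (-( (p+1) * (-t) ^ p)) t := by
        have := (Real.hasDerivAt_rpow_const (p := p+1) (x := -t)
          (Or.inl (by linarith))).comp t (hasDerivAt_neg t)
        refine this.congr_deriv ?_
        ring_nf
      have := h2.neg
      refine this.congr_deriv ?_
      rw [abs_of_neg ht]; ring
    refine h1.congr_of_eventuallyEq ?_
    filter_upwards [eventually_lt_nhds ht] with x hx
    have hxx : (0:ℝ) < -x := by linarith
    rw [Real.rpow_add hxx, Real.rpow_one, abs_of_neg hx]; ring
  · have key : HasDerivAt (fun x : ℝ => x * |x| ^ p) 0 0 := by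
      rw [hasDerivAt_iff_tendsto_slope]
      have h0 : Filter.Tendsto (fun x : ℝ => |x| ^ p) (nhdsWithin 0 {(0:ℝ)}ᶜ) (nhds 0) := by
        have : Filter.Tendsto (fun x : ℝ => |x| ^ p) (nhds 0) (nhds (|0| ^ p)) :=
          (continuous_abs.rpow_const (fun x => Or.inr hp.le)).tendsto 0
        simpa [Real.zero_rpow hp.ne'] using this.mono_left nhdsWithin_le_nhds
      refine h0.congr' ?_
      filter_upwards [self_mem_nhdsWithin] with x hx
      have hx0 : x ≠ 0 := hx
      rw [slope_def_field]; field_simp; simp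
    simpa [Real.zero_rpow hp.ne'] using key
  · have h1 : HasDerivAt (fun x : ℝ => x ^ (p + 1)) ((p+1) * |t| ^ p) t := by
      have := Real.hasDerivAt_rpow_const (p := p+1) (x := t) (Or.inl ht.ne')
      convert this using 2
      rw [abs_of_pos ht]; ring_nf
    refine h1.congr_of_eventuallyEq ?_
    filter_upwards [eventually_gt_nhds ht] with x hx
    rw [Real.rpow_add hx, Real.rpow_one, abs_of_pos hx]; ring

private lemma continuous_abs_rpow (p : ℝ) (hp : 0 < p) :
    Continuous fun t : ℝ => |t| ^ p :=
  continuous_abs.rpow_const fun _ => Or.inr hp.le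

private lemma integral_abs_rpow (p : ℝ) (hp : 0 < p) (s r : ℝ) :
    ∫ t in s..r, (p + 1) * |t| ^ p = r * |r| ^ p - s * |s| ^ p := by
  apply intervalIntegral.integral_eq_sub_of_hasDerivAt
    (fun t _ => hasDerivAt_mul_abs_rpow p hp t)
  exact (continuous_const.mul (continuous_abs_rpow p hp)).intervalIntegrable _ _

private lemma key_ineq (β : ℝ) (hβ : 1 < β) {s r : ℝ} (hsr : s ≤ r) :
    (2*β - 1) * (r * |r| ^ (β-1) - s * |s| ^ (β-1))^2 ≤
      β^2 * ((r - s) * (r * |r| ^ (2*(β-1)) - s * |s| ^ (2*(β-1)))) := by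
  set p := β - 1 with hp
  have hp0 : 0 < p := by rw [hp]; linarith
  have hg : Continuous fun t : ℝ => |t| ^ p := continuous_abs_rpow p hp0
  set B := ∫ t in s..r, |t| ^ p with hBdef
  set A := ∫ t in s..r, (|t| ^ p)^2 with hAdef
  have hβ1 : β = p + 1 := by rw [hp]; ring
  have hB : β * B = r * |r| ^ p - s * |s| ^ p := by
    have h := integral_abs_rpow p hp0 s r
    rw [intervalIntegral.integral_const_mul] at h
    rw [hβ1, hBdef]; exact h
  have hsq : ∀ t : ℝ, (|t| ^ p)^2 = |t| ^ (2*p) := by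
    intro t
    rw [← Real.rpow_natCast (|t| ^ p) 2, ← Real.rpow_mul (abs_nonneg t)]
    norm_num
    ring_nf
  have hA : (2*β - 1) * A = r * |r| ^ (2*p) - s * |s| ^ (2*p) := by
    have h := integral_abs_rpow (2*p) (by linarith) s r
    rw [intervalIntegral.integral_const_mul] at h
    have h2 : (2*β - 1) = 2*p + 1 := by rw [hp]; ring
    rw [h2, hAdef]
    simp only [hsq]
    exact h
  have hgen : ∀ c : ℝ, 0 ≤ A - 2*c*B + c^2*(r - s) := by
    intro c
    have hnn : 0 ≤ ∫ t in s..r, (|t| ^ p - c)^2 :=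
      intervalIntegral.integral_nonneg hsr (fun t _ => sq_nonneg _)
    have hexp : (∫ t in s..r, (|t| ^ p - c)^2) = A - 2*c*B + c^2*(r - s) := by
      have e1 : (∫ t in s..r, (|t| ^ p - c)^2)
          = ∫ t in s..r, ((|t| ^ p)^2 - 2*c*(|t| ^ p) + c^2) :=
        intervalIntegral.integral_congr fun t _ => by ring
      rw [e1, intervalIntegral.integral_add (f := fun t => (|t| ^ p)^2 - 2*c*(|t| ^ p)) (g := fun _ => c^2)
          (((hg.pow 2).sub (continuous_const.mul hg)).intervalIntegrable _ _)
          (continuous_const.intervalIntegrable _ _),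
        intervalIntegral.integral_sub (f := fun t => (|t| ^ p)^2) (g := fun t => 2*c*(|t| ^ p)) ((hg.pow 2).intervalIntegrable _ _)
          ((continuous_const.mul hg).intervalIntegrable _ _),
        intervalIntegral.integral_const_mul, intervalIntegral.integral_const]
      simp only [smul_eq_mul, ← hBdef, ← hAdef]
      ring
    rw [← hexp]; exact hnn
  have hCS : B^2 ≤ (r - s) * A := by
    rcases eq_or_lt_of_le hsr with he | hlt
    · subst he
      simp [hBdef, hAdef]
    · have hL : 0 < r - s := by linarith
      have h := hgen (B / (r - s))
      have h2 : 0 ≤ (A - 2*(B/(r-s))*B + (B/(r-s))^2*(r - s)) * (r - s) :=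
        mul_nonneg h hL.le
      have h3 : (A - 2*(B/(r-s))*B + (B/(r-s))^2*(r - s)) * (r - s)
          = A*(r-s) - B^2 := by
        field_simp
        ring
      rw [h3] at h2
      nlinarith
  calc (2*β - 1) * (r * |r| ^ p - s * |s| ^ p)^2
      = (2*β - 1) * (β*B)^2 := by rw [hB]
    _ = ((2*β - 1)*β^2) * B^2 := by ring
    _ ≤ ((2*β - 1)*β^2) * ((r - s)*A) := by
        apply mul_le_mul_of_nonneg_left hCS
        nlinarith
    _ = β^2 * ((r - s) * ((2*β - 1)*A)) := by ring
    _ = β^2 * ((r - s) * (r * |r| ^ (2*p) - s * |s| ^ (2*p))) := by rw [hA]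


/-- The function `h(t,τ) = 2(nt − τ|τ|^{β−1})² − C_β (t−τ)(n²t − τ|τ|^{2(β−1)})`. -/
def hfun (β : ℝ) (n : ℕ) (t τ : ℝ) : ℝ :=
  2 * ((n : ℝ) * t - τ * |τ| ^ (β - 1)) ^ 2 -
    (2 + 2 * (β - 1) ^ 2 / (2 * β - 1)) * (t - τ) *
      ((n : ℝ) ^ 2 * t - τ * |τ| ^ (2 * (β - 1)))

/-- For every `τ ∈ [−n^{1/(β−1)}, n^{1/(β−1)}]` one has
`h(n^{1/(β−1)}, τ) ≤ 0` and `h(−n^{1/(β−1)}, τ) ≤ 0`. -/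
theorem statement_10 (β : ℝ) (hβ : 1 < β) (n : ℕ) (hn : 0 < n)
    (τ : ℝ)
    (hτ : τ ∈ Set.Icc (-((n : ℝ) ^ ((1 : ℝ) / (β - 1)))) ((n : ℝ) ^ ((1 : ℝ) / (β - 1)))) :
    hfun β n ((n : ℝ) ^ ((1 : ℝ) / (β - 1))) τ ≤ 0 ∧
    hfun β n (-((n : ℝ) ^ ((1 : ℝ) / (β - 1)))) τ ≤ 0 := by
  obtain ⟨hτ1, hτ2⟩ := hτ
  have hn' : (0:ℝ) < n := by exact_mod_cast hn
  set T : ℝ := (n : ℝ) ^ ((1 : ℝ) / (β - 1)) with hTdef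
  have hbm : β - 1 ≠ 0 := by intro h; linarith [hβ]
  have hT : 0 < T := Real.rpow_pos_of_pos hn' _
  have hTn : T ^ (β - 1) = (n : ℝ) := by
    rw [hTdef, ← Real.rpow_mul hn'.le, one_div_mul_cancel hbm, Real.rpow_one]
  have hT2 : T ^ (2*(β - 1)) = (n : ℝ)^2 := by
    rw [show 2*(β-1) = (β-1)*2 by ring, Real.rpow_mul hT.le, hTn,
      Real.rpow_two]
  have h2β : (0:ℝ) < 2*β - 1 := by linarith
  have hc : 2 + 2 * (β - 1) ^ 2 / (2 * β - 1) = 2*β^2 / (2*β - 1) := by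
    field_simp
    ring
  constructor
  · have h1 := key_ineq β hβ hτ2
    rw [abs_of_pos hT, hTn, hT2] at h1
    rw [hfun, hc]
    rw [show 2*β^2 / (2*β - 1) * (T - τ) * ((n:ℝ)^2*T - τ*|τ|^(2*(β-1)))
        = (2*β^2 * ((T - τ) * ((n:ℝ)^2*T - τ*|τ|^(2*(β-1))))) / (2*β - 1) by ring,
      sub_nonpos, le_div_iff₀ h2β]
    nlinarith [h1]
  · have h1 := key_ineq β hβ hτ1
    rw [abs_neg, abs_of_pos hT, hTn, hT2] at h1
    rw [hfun, hc]
    rw [show 2*β^2 / (2*β - 1) * (-T - τ) * ((n:ℝ)^2*(-T) - τ*|τ|^(2*(β-1)))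
        = (2*β^2 * ((τ - -T) * (τ*|τ|^(2*(β-1)) - (-T)*(n:ℝ)^2))) / (2*β - 1) by ring,
      sub_nonpos, le_div_iff₀ h2β]
    nlinarith [h1]
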